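/- Let Z be an N × P real matrix with rows z_1, …, z_N, let y ∈ ℝ^N satisfy y_i ≤ 0 for all i, and let λ₁ ≥ 0, λ₂ ≥ 0 with λ₁ + λ₂ > 0. Then the penalized single-layer ReLU regression loss L₁(β) = Σ_{i=1}^N (y_i − max(0, ⟨z_i, β⟩))² + λ₁‖β‖₁ + λ₂‖β‖₂² is a convex function of β ∈ ℝ^P, and β = 0 is its unique global minimizer: L₁(β) > L₁(0) = ‖y‖² for every β ≠ 0. -/

import Mathlib

open scoped RealInnerProductSpace

lemma convexOn_finset_sum {ι E : Type*} [AddCommGroup E] [Module ℝ E] {s : Set E}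
    (t : Finset ι) (f : ι → E → ℝ) (hs : Convex ℝ s)
    (h : ∀ i ∈ t, ConvexOn ℝ s (f i)) :
    ConvexOn ℝ s (fun x => ∑ i ∈ t, f i x) := by
  classical
  induction t using Finset.induction_on with
  | empty => simpa using convexOn_const (0:ℝ) hs
  | insert _ _ hni ih =>
    rename_i a t'
    simp only [Finset.sum_insert hni]
    exact (h a (Finset.mem_insert_self a t')).add
      (ih fun i hi => h i (Finset.mem_insert_of_mem hi))

lemma convexOn_abs' : ConvexOn ℝ (Set.univ : Set ℝ) (fun x => |x|) := by
  have h1 := convexOn_id (convex_univ : Convex ℝ (Set.univ : Set ℝ))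
  have h2 := (-LinearMap.id : ℝ →ₗ[ℝ] ℝ).convexOn
    (convex_univ : Convex ℝ (Set.univ : Set ℝ))
  have h := h1.sup h2
  have he : (id ⊔ ⇑(-LinearMap.id : ℝ →ₗ[ℝ] ℝ)) = fun x : ℝ => |x| := by
    funext x; simp [Pi.sup_def, abs_eq_max_neg]
  rwa [he] at h

lemma relu_convex : ConvexOn ℝ (Set.univ : Set ℝ) (fun t => max 0 t) := by
  have h := (convexOn_const (0:ℝ) (convex_univ : Convex ℝ (Set.univ : Set ℝ))).sup
    (convexOn_id (convex_univ : Convex ℝ (Set.univ : Set ℝ)))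
  simpa [Pi.sup_def] using h

lemma term_convex (c : ℝ) (hc : c ≤ 0) :
    ConvexOn ℝ (Set.univ : Set ℝ) (fun t => (c - max 0 t) ^ 2) := by
  have hm : ∀ ⦃x : ℝ⦄, x ∈ (Set.univ : Set ℝ) → 0 ≤ max 0 x := fun x _ => le_max_left _ _
  have h1 : ConvexOn ℝ (Set.univ : Set ℝ) (fun t => (max 0 t) ^ 2) := by
    simpa [Pi.pow_def] using relu_convex.pow hm 2
  have h2 : ConvexOn ℝ (Set.univ : Set ℝ) (fun t => (-2 * c) * max 0 t) := by
    have := relu_convex.smul (c := -2 * c) (by nlinarith)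
    simpa using this
  have h3 := (h1.add h2).add (convexOn_const (c ^ 2) convex_univ)
  have heq : (fun t : ℝ => (c - max 0 t) ^ 2)
      = fun t => (max 0 t) ^ 2 + (-2 * c) * max 0 t + c ^ 2 := by
    funext t; ring
  rw [heq]; exact h3

/-- The penalized single-layer ReLU regression loss with non-positive responses,
`L₁(β) = Σᵢ (yᵢ - max(0, ⟪zᵢ, β⟫))² + λ₁‖β‖₁ + λ₂‖β‖₂²` with `λ₁, λ₂ ≥ 0` and
`λ₁ + λ₂ > 0`, is convex and has `β = 0` as its unique global minimizer, with
`L₁(0) = ‖y‖²`. -/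
theorem stmt_18 (N P : ℕ)
    (z : Fin N → EuclideanSpace ℝ (Fin P)) (y : Fin N → ℝ)
    (hy : ∀ i, y i ≤ 0)
    (lam1 lam2 : ℝ) (hlam1 : 0 ≤ lam1) (hlam2 : 0 ≤ lam2) (hsum : 0 < lam1 + lam2)
    (L : EuclideanSpace ℝ (Fin P) → ℝ)
    (hL : ∀ β, L β = ∑ i, (y i - max 0 ⟪z i, β⟫) ^ 2
        + lam1 * ∑ k, |β k| + lam2 * ∑ k, (β k) ^ 2) :
    ConvexOn ℝ Set.univ L ∧
    L 0 = ∑ i, (y i) ^ 2 ∧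
    ∀ β : EuclideanSpace ℝ (Fin P), β ≠ 0 → L 0 < L β := by
  have hL0 : L 0 = ∑ i, (y i) ^ 2 := by
    rw [hL]; simp
  refine ⟨?_, hL0, ?_⟩
  · -- convexity
    have hsum1 : ConvexOn ℝ (Set.univ : Set (EuclideanSpace ℝ (Fin P)))
        (fun β => ∑ i, (y i - max 0 ⟪z i, β⟫) ^ 2) := by
      apply convexOn_finset_sum _ _ convex_univ
      intro i _
      have h := (term_convex (y i) (hy i)).comp_linearMap (innerSL ℝ (z i)).toLinearMap
      simpa [Function.comp_def] using h
    have hsum2 : ConvexOn ℝ (Set.univ : Set (EuclideanSpace ℝ (Fin P)))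
        (fun β => lam1 * ∑ k, |β k|) := by
      have h : ConvexOn ℝ (Set.univ : Set (EuclideanSpace ℝ (Fin P)))
          (fun β => ∑ k, |β k|) := by
        apply convexOn_finset_sum _ _ convex_univ
        intro k _
        have := convexOn_abs'.comp_linearMap (EuclideanSpace.proj (𝕜 := ℝ) k).toLinearMap
        simpa [Function.comp_def] using this
      simpa [smul_eq_mul] using h.smul hlam1
    have hsum3 : ConvexOn ℝ (Set.univ : Set (EuclideanSpace ℝ (Fin P)))
        (fun β => lam2 * ∑ k, (β k) ^ 2) := by
      have h : ConvexOn ℝ (Set.univ : Set (EuclideanSpace ℝ (Fin P)))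
          (fun β => ∑ k, (β k) ^ 2) := by
        apply convexOn_finset_sum _ _ convex_univ
        intro k _
        have := (Even.convexOn_pow (n := 2) (by norm_num)).comp_linearMap
          (EuclideanSpace.proj (𝕜 := ℝ) k).toLinearMap
        simpa [Function.comp_def] using this
      simpa [smul_eq_mul] using h.smul hlam2
    have htot := (hsum1.add hsum2).add hsum3
    have : L = fun β => ∑ i, (y i - max 0 ⟪z i, β⟫) ^ 2
        + lam1 * ∑ k, |β k| + lam2 * ∑ k, (β k) ^ 2 := funext hL
    rw [this]; exact htot
  · -- unique minimizer
    intro β hβ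
    rw [hL0, hL]
    have h1 : ∑ i, (y i) ^ 2 ≤ ∑ i, (y i - max 0 ⟪z i, β⟫) ^ 2 := by
      apply Finset.sum_le_sum
      intro i _
      have hm : 0 ≤ max 0 ⟪z i, β⟫ := le_max_left _ _
      nlinarith [hy i]
    obtain ⟨k, hk⟩ : ∃ k, β k ≠ 0 := by
      by_contra h
      push_neg at h
      exact hβ (by ext k; simp [h k])
    have ha : 0 < ∑ k, |β k| :=
      Finset.sum_pos' (fun k _ => abs_nonneg _) ⟨k, Finset.mem_univ k, abs_pos.2 hk⟩
    have hb : 0 < ∑ k, (β k) ^ 2 :=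
      Finset.sum_pos' (fun k _ => sq_nonneg _) ⟨k, Finset.mem_univ k, by positivity⟩
    have hpos : 0 < lam1 * ∑ k, |β k| + lam2 * ∑ k, (β k) ^ 2 := by
      rcases lt_or_eq_of_le hlam1 with h1' | h1'
      · have := mul_pos h1' ha
        nlinarith
      · have h2' : 0 < lam2 := by nlinarith
        have := mul_pos h2' hb
        nlinarith
    linarith
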